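/- Let μ(t) = p1 sin(λ1 t + θ1) + p2 sin(λ2 t + θ2) with real constants p1, p2, θ1, θ2 and nonzero reals λ1, λ2 that are rationally independent, and let K(t) = [[μ(t), 10i], [−10i, −t²]]. Consider the second-order vector equation φ'' + K(t)φ = 0, which is equivalent to the Hamiltonian system (1.1) with A(t) ≡ 0, B(t) ≡ I (the 2×2 identity) and C(t) = −K(t). If the scalar equation φ1'' + μ(t)φ1 = 0 is oscillatory, then this Hamiltonian system (and hence the vector equation φ'' + K(t)φ = 0) is oscillatory. -/

import Mathlib

open Matrix Set Complex ComplexConjugate Filter Topology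

noncomputable section

/- STATEMENT 13 (Example 3.1): the vector equation φ'' + K(t)φ = 0 with
   K(t) = [[μ(t), 10i], [-10i, -t²]], μ(t) = p1 sin(λ1 t + θ1) + p2 sin(λ2 t + θ2),
   viewed as the Hamiltonian system (1.1) with A ≡ 0, B ≡ I, C = -K, is
   oscillatory provided the scalar equation φ1'' + μ(t) φ1 = 0 is oscillatory. -/

abbrev Mat2 := Matrix (Fin 2) (Fin 2) ℂ

def EntryDeriv (Z : ℝ → Mat2) (D : Mat2) (t : ℝ) : Prop :=
  ∀ i j, HasDerivAt (fun s => Z s i j) (D i j) t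

def IsConjoined (t0 : ℝ) (A B C Φ Ψ : ℝ → Mat2) : Prop :=
  (∀ t, t0 ≤ t → EntryDeriv Φ (A t * Φ t + B t * Ψ t) t) ∧
  (∀ t, t0 ≤ t → EntryDeriv Ψ (C t * Φ t - (A t)ᴴ * Ψ t) t) ∧
  (∀ t, t0 ≤ t → (Φ t)ᴴ * Ψ t = (Ψ t)ᴴ * Φ t)

def SysOsc (t0 : ℝ) (A B C : ℝ → Mat2) : Prop :=
  ∀ Φ Ψ : ℝ → Mat2, IsConjoined t0 A B C Φ Ψ →
    ∀ T : ℝ, ∃ t, T ≤ t ∧ (Φ t).det = 0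

/-- The scalar equation φ'' + p φ' + q φ = 0 on [t0, ∞) is oscillatory. -/
def SecondOrderOsc (t0 : ℝ) (p q : ℝ → ℝ) : Prop :=
  ∀ φ dφ : ℝ → ℝ,
    (∀ t, t0 ≤ t → HasDerivAt φ (dφ t) t) →
    (∀ t, t0 ≤ t → HasDerivAt dφ (-(p t * dφ t + q t * φ t)) t) →
    (∃ t, t0 ≤ t ∧ φ t ≠ 0) →
    ∀ T : ℝ, ∃ t, T ≤ t ∧ φ t = 0

section ODE
variable {E : Type*} [NormedAddCommGroup E] [NormedSpace ℝ E] [CompleteSpace E]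

/-- local existence step via Picard-Lindelöf -/
lemma ode_local_exists {v : ℝ → E → E} {L : ℝ} (hL : 1 ≤ L)
    (hlip : ∀ t, LipschitzWith (Real.toNNReal L) (v t))
    (hcont : ∀ x, Continuous fun t => v t x)
    (hbound : ∀ t x, ‖v t x‖ ≤ L * (‖x‖ + 1))
    (t₁ : ℝ) (x₁ : E) {ε : ℝ} (hε0 : 0 < ε)
    (hε : ε * (L * (‖x₁‖ + 2)) ≤ 1) :
    ∃ x : ℝ → E, x t₁ = x₁ ∧ ∀ t ∈ Icc (t₁ - ε) (t₁ + ε),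
      HasDerivWithinAt x (v t (x t)) (Icc (t₁ - ε) (t₁ + ε)) t := by
  have hL0 : (0:ℝ) < L := lt_of_lt_of_le one_pos hL
  have hx1 : (0:ℝ) ≤ ‖x₁‖ := norm_nonneg _
  have ht₁ : t₁ ∈ Icc (t₁ - ε) (t₁ + ε) := ⟨by linarith, by linarith⟩
  have hpl : IsPicardLindelof v (⟨t₁, ht₁⟩ : Icc (t₁ - ε) (t₁ + ε)) x₁ 1 0
      (Real.toNNReal (L * (‖x₁‖ + 2))) (Real.toNNReal L) := by
    constructor
    · intro t _; exact (hlip t).lipschitzOnWith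
    · intro x _; exact (hcont x).continuousOn
    · intro t _ x hx
      have h1 : ‖x‖ ≤ ‖x₁‖ + 1 := by
        have := mem_closedBall_iff_norm.mp hx
        have h2 := norm_sub_norm_le x x₁
        push_cast at this
        linarith
      calc ‖v t x‖ ≤ L * (‖x‖ + 1) := hbound t x
      _ ≤ L * (‖x₁‖ + 2) := by nlinarith
      _ ≤ _ := Real.le_coe_toNNReal _
    · have : max (t₁ + ε - t₁) (t₁ - (t₁ - ε)) = ε := by
        rw [add_sub_cancel_left, sub_sub_cancel, max_self]
      simp only [this, Real.coe_toNNReal _ (by positivity : (0:ℝ) ≤ L * (‖x₁‖ + 2)),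
        NNReal.coe_one, NNReal.coe_zero, sub_zero]
      calc L * (‖x₁‖ + 2) * ε = ε * (L * (‖x₁‖ + 2)) := by ring
      _ ≤ 1 := hε
  exact hpl.exists_eq_forall_mem_Icc_hasDerivWithinAt₀

/-- helper: Icc-derivative gives Ici-derivative at non-right-endpoint -/
lemma icc_deriv_to_ici {x : ℝ → E} {d : E} {a b t : ℝ} (ht : t ∈ Ico a b)
    (h : HasDerivWithinAt x d (Icc a b) t) :
    HasDerivWithinAt x d (Ici t) t := by
  apply h.mono_of_mem_nhdsWithin
  apply mem_nhdsWithin.mpr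
  refine ⟨Iio b, isOpen_Iio, ht.2, ?_⟩
  rintro y ⟨hy1, hy2⟩
  exact ⟨le_trans ht.1 hy2, le_of_lt hy1⟩

/-- a priori bound via Gronwall -/
lemma ode_apriori {v : ℝ → E → E} {L : ℝ} (hL : 1 ≤ L)
    (hbound : ∀ t x, ‖v t x‖ ≤ L * (‖x‖ + 1))
    {x : ℝ → E} {a b : ℝ} (hab : a ≤ b)
    (hx : ∀ t ∈ Icc a b, HasDerivWithinAt x (v t (x t)) (Icc a b) t) :
    ∀ t ∈ Icc a b, ‖x t‖ ≤ (‖x a‖ + 1) * Real.exp (L * (b - a)) := by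
  have hL0 : (0:ℝ) < L := lt_of_lt_of_le one_pos hL
  have hcont : ContinuousOn x (Icc a b) := fun t ht => (hx t ht).continuousWithinAt
  have key := norm_le_gronwallBound_of_norm_deriv_right_le (f := x)
    (f' := fun t => v t (x t)) (δ := ‖x a‖) (K := L) (ε := L) (a := a) (b := b)
    hcont (fun t ht => icc_deriv_to_ici ht (hx t (Ico_subset_Icc_self ht)))
    le_rfl (fun t ht => by
      have := hbound t (x t); calc ‖v t (x t)‖ ≤ L * (‖x t‖ + 1) := this
      _ = L * ‖x t‖ + L := by ring)
  intro t ht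
  have h1 := key t ht
  rw [gronwallBound_of_K_ne_0 (ne_of_gt hL0)] at h1
  have e1 : Real.exp (L * (t - a)) ≤ Real.exp (L * (b - a)) := by
    apply Real.exp_le_exp.mpr; nlinarith [ht.1, ht.2]
  have e2 : (1:ℝ) ≤ Real.exp (L * (t - a)) := by
    rw [← Real.exp_zero]; apply Real.exp_le_exp.mpr; nlinarith [ht.1, ht.2]
  have hdiv : L / L = 1 := div_self (ne_of_gt hL0)
  rw [hdiv] at h1
  have hxa : (0:ℝ) ≤ ‖x a‖ := norm_nonneg _
  have h1' : ‖x t‖ ≤ ‖x a‖ * Real.exp (L*(t-a)) + 1*(Real.exp (L*(t-a)) - 1) := h1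
  nlinarith [mul_le_mul_of_nonneg_left e1 (by linarith : (0:ℝ) ≤ ‖x a‖ + 1)]

lemma hasDerivWithinAt_singleton' (f : ℝ → E) (x : ℝ) (d : E) :
    HasDerivWithinAt f d {x} x := by
  rw [hasDerivWithinAt_iff_isLittleO, nhdsWithin_singleton]
  simp [Asymptotics.isLittleO_pure]

lemma ode_forward_Icc {v : ℝ → E → E} {L : ℝ} (hL : 1 ≤ L)
    (hlip : ∀ t, LipschitzWith (Real.toNNReal L) (v t))
    (hcont : ∀ x, Continuous fun t => v t x)
    (hbound : ∀ t x, ‖v t x‖ ≤ L * (‖x‖ + 1))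
    (T : ℝ) (x₀ : E) (n : ℝ) (hn : 0 ≤ n) :
    ∃ x : ℝ → E, x T = x₀ ∧ ∀ t ∈ Icc T (T + n),
      HasDerivWithinAt x (v t (x t)) (Icc T (T + n)) t := by
  have hL0 : (0:ℝ) < L := lt_of_lt_of_le one_pos hL
  set Bn : ℝ := (‖x₀‖ + 1) * Real.exp (L * n) with hBn
  have hBn0 : (0:ℝ) ≤ Bn := by positivity
  set ε : ℝ := 1 / (L * (Bn + 2)) with hε
  have hε0 : 0 < ε := by positivity
  have claim : ∀ k : ℕ, ∃ x : ℝ → E, x T = x₀ ∧ ∀ t ∈ Icc T (T + min ((k:ℝ) * ε) n),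
      HasDerivWithinAt x (v t (x t)) (Icc T (T + min ((k:ℝ) * ε) n)) t := by
    intro k
    induction k with
    | zero =>
      refine ⟨fun _ => x₀, rfl, ?_⟩
      have e0 : min ((0:ℕ) * ε : ℝ) n = 0 := by
        simp only [Nat.cast_zero, zero_mul]; exact min_eq_left hn
      intro t ht
      rw [Nat.cast_zero, zero_mul, min_eq_left hn, add_zero, Icc_self] at ht ⊢
      rw [mem_singleton_iff] at ht
      subst ht
      exact hasDerivWithinAt_singleton' _ _ _
    | succ k ih =>
      obtain ⟨x, hxT, hx⟩ := ih
      by_cases hcn : n ≤ (k:ℝ) * ε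
      · have e1 : min ((k:ℝ) * ε) n = n := min_eq_right hcn
        have e2 : min (((k:ℕ)+1 : ℕ) * ε : ℝ) n = n := by
          apply min_eq_right
          push_cast
          nlinarith
        rw [e1] at hx
        rw [e2]
        exact ⟨x, hxT, hx⟩
      · push_neg at hcn
        have e1 : min ((k:ℝ) * ε) n = (k:ℝ) * ε := min_eq_left (le_of_lt hcn)
        rw [e1] at hx
        set c : ℝ := (k:ℝ) * ε with hc
        have hc0 : 0 ≤ c := by positivity
        set c' : ℝ := min (((k:ℕ)+1 : ℕ) * ε : ℝ) n with hc'
        have hcc' : c < c' := by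
          apply lt_min _ hcn
          push_cast
          nlinarith
        have hc'le : c' ≤ c + ε := by
          apply min_le_of_left_le
          push_cast
          nlinarith
        have hc'n : c' ≤ n := min_le_right _ _
        set b : ℝ := T + c with hb
        set ε' : ℝ := c' - c with hε'
        have hε'0 : 0 < ε' := by simp only [hε']; linarith
        have hε'ε : ε' ≤ ε := by simp only [hε']; linarith
        -- endpoint bound
        have hxb : ‖x b‖ ≤ Bn := by
          have hap := ode_apriori hL hbound (x := x) (a := T) (b := T + c)
            (by linarith) hx (T + c) ⟨by linarith, le_rfl⟩
          rw [hxT, add_sub_cancel_left] at hap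
          have : Real.exp (L * c) ≤ Real.exp (L * n) := by
            apply Real.exp_le_exp.mpr
            nlinarith
          calc ‖x b‖ ≤ (‖x₀‖ + 1) * Real.exp (L * c) := hap
          _ ≤ Bn := by rw [hBn]; nlinarith [norm_nonneg x₀]
        obtain ⟨y, hyb, hy⟩ := ode_local_exists hL hlip hcont hbound b (x b) hε'0
          (by
            have h1 : ε' * (L * (‖x b‖ + 2)) ≤ ε * (L * (Bn + 2)) := by
              apply mul_le_mul hε'ε _ (by positivity) (le_of_lt hε0)
              apply mul_le_mul_of_nonneg_left _ (le_of_lt hL0)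
              linarith
            have h2 : ε * (L * (Bn + 2)) = 1 := by
              rw [hε]; field_simp
            linarith)
        set z : ℝ → E := fun t => if t ≤ b then x t else y t with hz
        have hzT : z T = x₀ := by
          rw [hz]; simp only [if_pos (by linarith : T ≤ b)]; exact hxT
        refine ⟨z, hzT, ?_⟩
        intro t ht
        have hbe : b + ε' = T + c' := by rw [hb, hε']; ring
        have hJsub : Icc T (T + c') ∩ Iic b ⊆ Icc T (T + c) :=
          fun s hs => ⟨hs.1.1, hs.2⟩
        have hJsub2 : Icc T (T + c') ∩ Ici b ⊆ Icc (b - ε') (b + ε') :=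
          fun s hs => ⟨by have h' : b ≤ s := hs.2; linarith,
            by rw [hbe]; exact hs.1.2⟩
        rcases lt_trichotomy t b with h | h | h
        · -- t < b
          have h1 : HasDerivWithinAt x (v t (x t)) (Icc T (T + c)) t :=
            hx t ⟨ht.1, by linarith⟩
          have hmem : Icc T (T + c) ∈ 𝓝[Icc T (T + c')] t :=
            mem_nhdsWithin.mpr ⟨Iio b, isOpen_Iio, h,
              fun s hs => ⟨hs.2.1, by have h' : s < b := hs.1; linarith⟩⟩
          have h2 := h1.mono_of_mem_nhdsWithin hmem
          have hev : z =ᶠ[𝓝[Icc T (T + c')] t] x := by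
            apply Filter.eventuallyEq_of_mem
              (mem_nhdsWithin.mpr ⟨Iio b, isOpen_Iio, h, fun s hs => hs⟩)
            rintro s ⟨hs1, _⟩
            have hs1' : s < b := hs1
            simp only [hz, if_pos (le_of_lt hs1')]
          have hzt : z t = x t := by simp only [hz, if_pos (le_of_lt h)]
          have h3 := h2.congr_of_eventuallyEq hev hzt
          rwa [← hzt] at h3
        · -- t = b
          subst h
          have hzb : z b = x b := by simp [hz]
          have hzby : z b = y b := by rw [hzb, hyb]
          have h1 : HasDerivWithinAt x (v b (x b)) (Icc T (T + c)) b :=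
            hx b ⟨by linarith [hc0], le_rfl⟩
          have h1' : HasDerivWithinAt z (v b (z b)) (Icc T (T + c') ∩ Iic b) b := by
            rw [show v b (z b) = v b (x b) by rw [hzb]]
            exact (h1.mono hJsub).congr
              (fun s hs => by
                have hs' : s ≤ b := hs.2
                simp only [hz]; rw [if_pos hs']) hzb
          have h2 : HasDerivWithinAt y (v b (y b)) (Icc (b - ε') (b + ε')) b :=
            hy b ⟨by linarith, by linarith⟩
          have h2' : HasDerivWithinAt z (v b (z b)) (Icc T (T + c') ∩ Ici b) b := by
            rw [show v b (z b) = v b (y b) by rw [hzby]]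
            refine (h2.mono hJsub2).congr (fun s hs => ?_) hzby
            have hs' : b ≤ s := hs.2
            rcases eq_or_lt_of_le hs' with h' | h'
            · simp only [hz, ← h', if_pos le_rfl, hyb]
            · simp only [hz, if_neg (not_le.mpr h')]
          have h3 := h1'.union h2'
          rwa [← inter_union_distrib_left, Iic_union_Ici, inter_univ] at h3
        · -- b < t
          have h1 : HasDerivWithinAt y (v t (y t)) (Icc (b - ε') (b + ε')) t :=
            hy t ⟨by linarith, by rw [hbe]; exact ht.2⟩
          have hmem : Icc (b - ε') (b + ε') ∈ 𝓝[Icc T (T + c')] t :=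
            mem_nhdsWithin.mpr ⟨Ioi b, isOpen_Ioi, h,
              fun s hs => ⟨by have h' : b < s := hs.1; linarith,
                by rw [hbe]; exact hs.2.2⟩⟩
          have h2 := h1.mono_of_mem_nhdsWithin hmem
          have hev : z =ᶠ[𝓝[Icc T (T + c')] t] y := by
            apply Filter.eventuallyEq_of_mem
              (mem_nhdsWithin.mpr ⟨Ioi b, isOpen_Ioi, h, fun s hs => hs⟩)
            rintro s ⟨hs1, _⟩
            have hs1' : b < s := hs1
            simp only [hz, if_neg (not_le.mpr hs1')]
          have hzt : z t = y t := by simp only [hz, if_neg (not_le.mpr h)]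
          have h3 := h2.congr_of_eventuallyEq hev hzt
          rwa [← hzt] at h3
  obtain ⟨K, hK⟩ := exists_nat_ge (n / ε)
  obtain ⟨x, hxT, hx⟩ := claim K
  have : min ((K:ℝ) * ε) n = n := by
    apply min_eq_right
    rw [div_le_iff₀ hε0] at hK
    linarith
  rw [this] at hx
  exact ⟨x, hxT, hx⟩

lemma ode_forward_global {v : ℝ → E → E} {L : ℝ} (hL : 1 ≤ L)
    (hlip : ∀ t, LipschitzWith (Real.toNNReal L) (v t))
    (hcont : ∀ x, Continuous fun t => v t x)
    (hbound : ∀ t x, ‖v t x‖ ≤ L * (‖x‖ + 1))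
    (T : ℝ) (x₀ : E) :
    ∃ x : ℝ → E, x T = x₀ ∧ (∀ t, T < t → HasDerivAt x (v t (x t)) t) ∧
      HasDerivWithinAt x (v T x₀) (Ici T) T := by
  choose xs hxs0 hxs using fun n : ℕ =>
    ode_forward_Icc hL hlip hcont hbound T x₀ n (Nat.cast_nonneg n)
  have agree : ∀ m k : ℕ, m ≤ k → EqOn (xs m) (xs k) (Icc T (T + m)) := by
    intro m k hmk
    have hsub : Icc T (T + (m:ℝ)) ⊆ Icc T (T + (k:ℝ)) :=
      Icc_subset_Icc le_rfl (by have : (m:ℝ) ≤ k := Nat.cast_le.mpr hmk; linarith)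
    apply ODE_solution_unique (v := v) (K := Real.toNNReal L) hlip
    · exact fun t ht => (hxs m t ht).continuousWithinAt
    · exact fun t ht => icc_deriv_to_ici ht (hxs m t (Ico_subset_Icc_self ht))
    · exact fun t ht => ((hxs k t (hsub ht)).continuousWithinAt).mono hsub
    · intro t ht
      have ht' : t ∈ Ico T (T + (k:ℝ)) :=
        ⟨ht.1, lt_of_lt_of_le ht.2 (by have : (m:ℝ) ≤ k := Nat.cast_le.mpr hmk; linarith)⟩
      exact icc_deriv_to_ici ht' (hxs k t (Ico_subset_Icc_self ht'))
    · rw [hxs0 m, hxs0 k]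
  have agree2 : ∀ (m k : ℕ) (s : ℝ), s ∈ Icc T (T + m) → s ∈ Icc T (T + k) →
      xs m s = xs k s := by
    intro m k s hsm hsk
    rcases le_total m k with h | h
    · exact agree m k h hsm
    · exact (agree k m h hsk).symm
  set X : ℝ → E := fun t => xs (⌊t - T⌋₊ + 1) t with hX
  have Xeq : ∀ (s : ℝ) (m : ℕ), T ≤ s → s ≤ T + m → X s = xs m s := by
    intro s m hs1 hs2
    apply agree2
    · refine ⟨hs1, ?_⟩
      have := Nat.lt_floor_add_one (s - T)
      push_cast
      linarith
    · exact ⟨hs1, hs2⟩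
  have hXT : X T = x₀ := by
    have : X T = xs 1 T := Xeq T 1 le_rfl (by norm_num)
    rw [this, hxs0]
  refine ⟨X, hXT, ?_, ?_⟩
  · intro t ht
    set m : ℕ := ⌊t - T⌋₊ + 2 with hm
    have htm : t < T + m := by
      have := Nat.lt_floor_add_one (t - T)
      push_cast [hm]
      linarith
    have hev : X =ᶠ[𝓝 t] xs m := by
      apply Filter.eventually_of_mem (isOpen_Ioo.mem_nhds (⟨ht, htm⟩ : t ∈ Ioo T (T + m)))
      intro s hs
      exact Xeq s m (le_of_lt hs.1) (le_of_lt hs.2)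
    have hd : HasDerivAt (xs m) (v t (xs m t)) t := by
      apply (hxs m t ⟨le_of_lt ht, le_of_lt htm⟩).hasDerivAt
      exact Filter.mem_of_superset (isOpen_Ioo.mem_nhds (⟨ht, htm⟩ : t ∈ Ioo T (T + m)))
        Ioo_subset_Icc_self
    have hXt : X t = xs m t := Xeq t m (le_of_lt ht) (le_of_lt htm)
    have := hd.congr_of_eventuallyEq hev
    rwa [← hXt] at this
  · have h1 : HasDerivWithinAt (xs 1) (v T x₀) (Icc T (T + (1:ℕ))) T := by
      have := hxs 1 T ⟨le_rfl, by norm_num⟩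
      rwa [hxs0] at this
    have hmem : Icc T (T + ((1:ℕ):ℝ)) ∈ 𝓝[Ici T] T := by
      apply mem_nhdsWithin.mpr
      exact ⟨Iio (T + 1), isOpen_Iio, by norm_num,
        fun s hs => ⟨hs.2, by have h' : s < T + 1 := hs.1; push_cast; linarith⟩⟩
    have h2 := h1.mono_of_mem_nhdsWithin hmem
    have hev : X =ᶠ[𝓝[Ici T] T] xs 1 := by
      apply Filter.eventuallyEq_of_mem hmem
      intro s hs
      exact Xeq s 1 hs.1 hs.2
    exact h2.congr_of_eventuallyEq hev (by rw [hXT, hxs0])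

lemma ode_global {v : ℝ → E → E} {L : ℝ} (hL : 1 ≤ L)
    (hlip : ∀ t, LipschitzWith (Real.toNNReal L) (v t))
    (hcont : ∀ x, Continuous fun t => v t x)
    (hbound : ∀ t x, ‖v t x‖ ≤ L * (‖x‖ + 1))
    (T : ℝ) (x₀ : E) :
    ∃ x : ℝ → E, x T = x₀ ∧ ∀ t, HasDerivAt x (v t (x t)) t := by
  obtain ⟨xf, hxf0, hxf, hxfT⟩ := ode_forward_global hL hlip hcont hbound T x₀
  set u : ℝ → E → E := fun s y => -(v (2*T - s) y) with hu
  have hulip : ∀ s, LipschitzWith (Real.toNNReal L) (u s) := by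
    intro s
    apply LipschitzWith.of_dist_le_mul
    intro a b
    have := (hlip (2*T - s)).dist_le_mul a b
    simpa [hu, dist_neg_neg] using this
  have hucont : ∀ x, Continuous fun s => u s x := by
    intro x
    exact (((hcont x).comp (continuous_const.sub continuous_id))).neg
  have hubound : ∀ s y, ‖u s y‖ ≤ L * (‖y‖ + 1) := by
    intro s y
    simpa [hu, norm_neg] using hbound (2*T - s) y
  obtain ⟨yb, hyb0, hyb, hybT⟩ := ode_forward_global hL hulip hucont hubound T x₀
  set X : ℝ → E := fun t => if T ≤ t then xf t else yb (2*T - t) with hX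
  have hXT : X T = x₀ := by simp [hX, hxf0]
  refine ⟨X, hXT, ?_⟩
  intro t
  rcases lt_trichotomy t T with h | h | h
  · -- t < T
    have h2 : T < 2*T - t := by linarith
    have hg : HasDerivAt (fun s : ℝ => 2*T - s) (-1) t := by
      simpa using (hasDerivAt_id t).const_sub (2*T)
    have hy := hyb (2*T - t) h2
    have hcomp := hy.scomp t hg
    have e1 : 2*T - (2*T - t) = t := by ring
    have hval : (-1 : ℝ) • u (2*T - t) (yb (2*T - t)) = v t (yb (2*T - t)) := by
      simp only [hu, e1, neg_smul, one_smul, neg_neg]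
    rw [hval] at hcomp
    have hev : X =ᶠ[𝓝 t] fun s => yb (2*T - s) := by
      apply Filter.eventually_of_mem (isOpen_Iio.mem_nhds h)
      intro s hs
      have : ¬ T ≤ s := not_le.mpr hs
      simp [hX, this]
    have hXt : X t = yb (2*T - t) := by simp [hX, not_le.mpr h]
    have := hcomp.congr_of_eventuallyEq hev
    rwa [← hXt] at this
  · -- t = T
    subst h
    have hright : HasDerivWithinAt X (v t x₀) (Ici t) t := by
      apply hxfT.congr_of_eventuallyEq _ (by simp [hX, hxf0])
      apply Filter.eventuallyEq_of_mem self_mem_nhdsWithin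
      intro s hs
      have h' : t ≤ s := hs
      simp [hX, h']
    have hleft : HasDerivWithinAt X (v t x₀) (Iic t) t := by
      have hg : HasDerivWithinAt (fun s : ℝ => 2*t - s) (-1) (Iic t) t := by
        simpa using ((hasDerivAt_id t).const_sub (2*t)).hasDerivWithinAt
      have hmaps : MapsTo (fun s : ℝ => 2*t - s) (Iic t) (Ici t) :=
        fun s hs => by have : s ≤ t := hs; simp only [mem_Ici]; linarith
      have hcomp := HasDerivWithinAt.scomp_of_eq t hybT hg hmaps (by ring)
      have hval : (-1 : ℝ) • u t x₀ = v t x₀ := by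
        have e1 : 2*t - t = t := by ring
        simp only [hu, e1, neg_smul, one_smul, neg_neg]
      rw [hval] at hcomp
      apply hcomp.congr_of_eventuallyEq _ (by simp [hX, hxf0, hyb0, show 2*t - t = t by ring])
      apply Filter.eventuallyEq_of_mem self_mem_nhdsWithin
      intro s hs
      have hs' : s ≤ t := hs
      rcases eq_or_lt_of_le hs' with h' | h'
      · subst h'
        simp [hX, hxf0, hyb0, show 2*s - s = s by ring]
      · simp [hX, not_le.mpr h', Function.comp]
    have := hleft.union hright
    rw [Iic_union_Ici] at this
    rw [← hasDerivWithinAt_univ (𝕜 := ℝ)]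
    have hXt : X t = x₀ := hXT
    rwa [hXt]
  · -- T < t
    have hev : X =ᶠ[𝓝 t] xf := by
      apply Filter.eventually_of_mem (isOpen_Ioi.mem_nhds h)
      intro s hs
      simp [hX, le_of_lt (mem_Ioi.mp hs)]
    have hXt : X t = xf t := by simp [hX, le_of_lt h]
    have := (hxf t h).congr_of_eventuallyEq hev
    rwa [← hXt] at this

end ODE

instance : NormedRing Mat2 := Matrix.linftyOpNormedRing
instance : NormedAlgebra ℝ Mat2 := Matrix.linftyOpNormedAlgebra
instance : NormedAlgebra ℂ Mat2 := Matrix.linftyOpNormedAlgebra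

example : CompleteSpace Mat2 := by infer_instance

def entryCLM (i j : Fin 2) : Mat2 →L[ℝ] ℂ :=
  LinearMap.toContinuousLinearMap
    { toFun := fun M : Mat2 => M i j,
      map_add' := fun M N => rfl,
      map_smul' := fun r M => rfl }

lemma hasDerivAt_entries {Z : ℝ → Mat2} {D : Mat2} {t : ℝ}
    (h : HasDerivAt Z D t) (i j : Fin 2) :
    HasDerivAt (fun s => Z s i j) (D i j) t := by
  have := (entryCLM i j).hasFDerivAt.comp_hasDerivAt t h
  exact this

lemma hasDerivAt_of_entries {Z : ℝ → Mat2} {D : Mat2} {t : ℝ}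
    (h : ∀ i j, HasDerivAt (fun s => Z s i j) (D i j) t) :
    HasDerivAt Z D t := by
  have key : HasDerivAt (fun s => ∑ i : Fin 2, ∑ j : Fin 2,
      Matrix.single i j (Z s i j))
      (∑ i : Fin 2, ∑ j : Fin 2, Matrix.single i j (D i j)) t := by
    apply HasDerivAt.fun_sum
    intro i _
    apply HasDerivAt.fun_sum
    intro j _
    have := (h i j).smul_const (Matrix.single i j (1 : ℂ))
    simpa [Matrix.smul_single, smul_eq_mul] using this
  have e1 : (fun s => ∑ i : Fin 2, ∑ j : Fin 2, Matrix.single i j (Z s i j)) = Z := by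
    funext s; exact (Matrix.matrix_eq_sum_single (Z s)).symm
  have e2 : (∑ i : Fin 2, ∑ j : Fin 2, Matrix.single i j (D i j)) = D :=
    (Matrix.matrix_eq_sum_single D).symm
  rwa [e1, e2] at key


set_option maxHeartbeats 1000000 in
theorem example_3_1
    (t0 : ℝ) (p1 p2 lam1 lam2 θ1 θ2 : ℝ)
    (hlam1 : lam1 ≠ 0) (hlam2 : lam2 ≠ 0)
    -- λ1 and λ2 are rationally independent:
    (hindep : ∀ q1 q2 : ℚ, (q1 : ℝ) * lam1 + (q2 : ℝ) * lam2 = 0 →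
      q1 = 0 ∧ q2 = 0)
    (μ : ℝ → ℝ)
    (hμ : ∀ t, μ t = p1 * Real.sin (lam1 * t + θ1) + p2 * Real.sin (lam2 * t + θ2))
    (K : ℝ → Mat2)
    (hK : ∀ t, K t = !![((μ t : ℝ) : ℂ), 10 * Complex.I;
                       -(10 * Complex.I), ((-(t ^ 2) : ℝ) : ℂ)])
    (hosc : SecondOrderOsc t0 (fun _ => 0) μ) :
    SysOsc t0 (fun _ => 0) (fun _ => 1) (fun t => -(K t)) := by
  intro Φ Ψ hconj T₁
  by_contra hcon
  push_neg at hcon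
  set T := max T₁ t0 with hT
  have hTt0 : t0 ≤ T := le_max_right _ _
  obtain ⟨hΦ', hΨ', hJ⟩ := hconj
  have hunit : ∀ t, T ≤ t → IsUnit (Φ t) := by
    intro t ht
    rw [Matrix.isUnit_iff_isUnit_det]
    exact isUnit_iff_ne_zero.mpr (hcon t (le_trans (le_max_left _ _) ht))
  have hΦd : ∀ t, T ≤ t → HasDerivAt Φ (Ψ t) t := by
    intro t ht
    have h1 := hΦ' t (le_trans hTt0 ht)
    have e : (fun _ : ℝ => (0:Mat2)) t * Φ t + (fun _ : ℝ => (1:Mat2)) t * Ψ t = Ψ t := by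
      simp
    rw [e] at h1
    exact hasDerivAt_of_entries h1
  have hΨd : ∀ t, T ≤ t → HasDerivAt Ψ (-(K t) * Φ t) t := by
    intro t ht
    have h1 := hΨ' t (le_trans hTt0 ht)
    have e : (fun t => -(K t)) t * Φ t - ((fun _ : ℝ => (0:Mat2)) t)ᴴ * Ψ t
        = -(K t) * Φ t := by simp
    rw [e] at h1
    exact hasDerivAt_of_entries h1
  set Ri : ℝ → Mat2 := fun t => Ring.inverse (Φ t) with hRi
  set W : ℝ → Mat2 := fun t => Ψ t * Ri t with hWdef
  have hRiΦ : ∀ t, T ≤ t → Ri t * Φ t = 1 := fun t ht =>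
    Ring.inverse_mul_cancel _ (hunit t ht)
  have hΦRi : ∀ t, T ≤ t → Φ t * Ri t = 1 := fun t ht =>
    Ring.mul_inverse_cancel _ (hunit t ht)
  have hWd : ∀ t, T ≤ t → HasDerivAt W (-(K t) - W t * W t) t := by
    intro t ht
    obtain ⟨u, hu⟩ := hunit t ht
    have hRit : Ri t = ↑u⁻¹ := by rw [hRi]; simp only [← hu, Ring.inverse_unit]
    have h1 : HasFDerivAt Ring.inverse
        (-ContinuousLinearMap.mulLeftRight ℝ Mat2 ↑u⁻¹ ↑u⁻¹) (Φ t) := by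
      rw [← hu]; exact hasFDerivAt_ringInverse u
    have h2 : HasDerivAt Ri (-(Ri t * Ψ t * Ri t)) t := by
      have h3 := h1.comp_hasDerivAt t (hΦd t ht)
      simp only [ContinuousLinearMap.neg_apply, ContinuousLinearMap.mulLeftRight_apply,
        Function.comp_def] at h3
      rw [hRit]
      exact h3
    have h4 := (hΨd t ht).mul h2
    have e : -(K t) * Φ t * Ri t + Ψ t * -(Ri t * Ψ t * Ri t)
        = -(K t) - W t * W t := by
      have e1 : -(K t) * Φ t * Ri t = -(K t) := by
        rw [mul_assoc, hΦRi t ht, mul_one]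
      have e2 : Ψ t * -(Ri t * Ψ t * Ri t) = -(W t * W t) := by
        rw [hWdef]
        simp only [mul_neg]
        congr 1
        noncomm_ring
      rw [e1, e2]
      rw [sub_eq_add_neg]
    rwa [e] at h4
  have hherm : ∀ t, T ≤ t → (W t)ᴴ = W t := by
    intro t ht
    have hc := hJ t (le_trans hTt0 ht)
    have hRiH : (Ri t)ᴴ * (Φ t)ᴴ = 1 := by
      rw [← Matrix.conjTranspose_mul, hΦRi t ht, Matrix.conjTranspose_one]
    calc (W t)ᴴ = (Ri t)ᴴ * (Ψ t)ᴴ := by rw [hWdef]; exact Matrix.conjTranspose_mul _ _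
    _ = (Ri t)ᴴ * (Ψ t)ᴴ * (Φ t * Ri t) := by rw [hΦRi t ht, mul_one]
    _ = (Ri t)ᴴ * ((Ψ t)ᴴ * Φ t) * Ri t := by
        rw [mul_assoc, mul_assoc, mul_assoc]
    _ = (Ri t)ᴴ * ((Φ t)ᴴ * Ψ t) * Ri t := by rw [← hc]
    _ = ((Ri t)ᴴ * (Φ t)ᴴ) * (Ψ t * Ri t) := by
        rw [mul_assoc, mul_assoc, mul_assoc]
    _ = W t := by rw [hRiH, one_mul, hWdef]
  set w : ℝ → ℝ := fun t => (W t 0 0).re with hwdef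
  set ρ : ℝ → ℝ := fun t => Complex.normSq (W t 1 0) with hρdef
  have hρ0 : ∀ t, 0 ≤ ρ t := fun t => Complex.normSq_nonneg _
  have hwd : ∀ t, T ≤ t → HasDerivAt w (-(w t)^2 - μ t - ρ t) t := by
    intro t ht
    have h1 := hasDerivAt_entries (hWd t ht) 0 0
    have h2 := Complex.reCLM.hasFDerivAt.comp_hasDerivAt t h1
    have hW00 : W t 0 0 = ((w t : ℝ) : ℂ) := by
      have h3 := congrFun (congrFun (hherm t ht) 0) 0
      rw [Matrix.conjTranspose_apply] at h3
      exact (Complex.conj_eq_iff_re.mp h3).symm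
    have hW01 : W t 0 1 = (starRingEnd ℂ) (W t 1 0) := by
      have h3 := congrFun (congrFun (hherm t ht) 0) 1
      rw [Matrix.conjTranspose_apply] at h3
      exact h3.symm
    have hval : ((-(K t) - W t * W t) 0 0).re = -(w t)^2 - μ t - ρ t := by
      rw [Matrix.sub_apply, Matrix.neg_apply, Matrix.mul_apply]
      rw [Fin.sum_univ_two, hW00, hW01, hK t]
      have hcjm : (starRingEnd ℂ) (W t 1 0) * (W t 1 0)
          = ((Complex.normSq (W t 1 0) : ℝ) : ℂ) := by
        rw [mul_comm]; exact Complex.mul_conj _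
      rw [hcjm]
      simp [Complex.sub_re, Complex.add_re, Complex.mul_re, hρdef]
      ring
    rw [← hval]
    exact h2
  -- Part C: scalar comparison argument
  set M : ℝ := |p1| + |p2| with hMdef
  set L : ℝ := 1 + M with hLdef
  have hM0 : (0:ℝ) ≤ M := by rw [hMdef]; positivity
  have hL1 : (1:ℝ) ≤ L := by rw [hLdef]; linarith
  have hμM : ∀ t, |μ t| ≤ M := by
    intro t
    rw [hμ t, hMdef]
    calc |p1 * Real.sin (lam1*t+θ1) + p2 * Real.sin (lam2*t+θ2)|
        ≤ |p1 * Real.sin (lam1*t+θ1)| + |p2 * Real.sin (lam2*t+θ2)| := abs_add_le _ _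
    _ ≤ |p1| + |p2| := by
        rw [abs_mul, abs_mul]
        have h1 := Real.abs_sin_le_one (lam1*t+θ1)
        have h2 := Real.abs_sin_le_one (lam2*t+θ2)
        nlinarith [abs_nonneg p1, abs_nonneg p2, abs_nonneg (Real.sin (lam1*t+θ1)),
          abs_nonneg (Real.sin (lam2*t+θ2))]
  have hμcont : Continuous μ := by
    have he : μ = fun t => p1 * Real.sin (lam1 * t + θ1) + p2 * Real.sin (lam2 * t + θ2) :=
      funext hμ
    rw [he]
    exact (continuous_const.mul (Real.continuous_sin.comp
        ((continuous_const.mul continuous_id).add continuous_const))).add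
      (continuous_const.mul (Real.continuous_sin.comp
        ((continuous_const.mul continuous_id).add continuous_const)))
  set vf : ℝ → (ℝ × ℝ) → (ℝ × ℝ) := fun t p => (p.2, -(μ t * p.1)) with hvf
  have hlip : ∀ t, LipschitzWith (Real.toNNReal L) (vf t) := by
    intro t
    apply LipschitzWith.of_dist_le_mul
    intro p q
    rw [Real.coe_toNNReal L (by linarith)]
    simp only [hvf, Prod.dist_eq, Real.dist_eq]
    have hD0 : (0:ℝ) ≤ max |p.1 - q.1| |p.2 - q.2| := le_max_of_le_left (abs_nonneg _)
    apply max_le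
    · calc |p.2 - q.2| ≤ max |p.1 - q.1| |p.2 - q.2| := le_max_right _ _
      _ ≤ L * max |p.1 - q.1| |p.2 - q.2| := by nlinarith
    · have e1 : |-(μ t * p.1) - -(μ t * q.1)| = |μ t| * |p.1 - q.1| := by
        rw [show -(μ t * p.1) - -(μ t * q.1) = μ t * (q.1 - p.1) by ring, abs_mul,
          abs_sub_comm q.1 p.1]
      rw [e1]
      have h1 : |p.1 - q.1| ≤ max |p.1 - q.1| |p.2 - q.2| := le_max_left _ _
      have h2 := hμM t
      have h3 := abs_nonneg (p.1 - q.1)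
      have h4 := abs_nonneg (μ t)
      nlinarith
  have hcont2 : ∀ p, Continuous fun t => vf t p := by
    intro p
    simp only [hvf]
    exact Continuous.prodMk continuous_const ((hμcont.mul continuous_const).neg)
  have hbound2 : ∀ t p, ‖vf t p‖ ≤ L * (‖p‖ + 1) := by
    intro t p
    have hp : ‖p‖ = max ‖p.1‖ ‖p.2‖ := Prod.norm_def p
    have hn0 : (0:ℝ) ≤ ‖p‖ := norm_nonneg _
    rw [Prod.norm_def]
    simp only [hvf]
    apply max_le
    · have : ‖p.2‖ ≤ ‖p‖ := by rw [hp]; exact le_max_right _ _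
      nlinarith
    · have h1 : ‖p.1‖ ≤ ‖p‖ := by rw [hp]; exact le_max_left _ _
      have h2 : ‖-(μ t * p.1)‖ = |μ t| * ‖p.1‖ := by
        rw [norm_neg, Real.norm_eq_abs, abs_mul, Real.norm_eq_abs]
      rw [h2]
      have h3 := hμM t
      have h4 := abs_nonneg (μ t)
      have h5 := norm_nonneg p.1
      nlinarith
  obtain ⟨x, hx0, hxd⟩ := ode_global hL1 hlip hcont2 hbound2 T (1, w T)
  set φ : ℝ → ℝ := fun s => (x s).1 with hφdef
  set dφ : ℝ → ℝ := fun s => (x s).2 with hdφdef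
  have hφd : ∀ s, HasDerivAt φ (dφ s) s := by
    intro s
    have h1 := (ContinuousLinearMap.fst ℝ ℝ ℝ).hasFDerivAt.comp_hasDerivAt s (hxd s)
    simpa [hvf, Function.comp_def] using h1
  have hdφd : ∀ s, HasDerivAt dφ (-(μ s * φ s)) s := by
    intro s
    have h1 := (ContinuousLinearMap.snd ℝ ℝ ℝ).hasFDerivAt.comp_hasDerivAt s (hxd s)
    simpa [hvf, Function.comp_def] using h1
  have hφT : φ T = 1 := by rw [hφdef]; simp only [hx0]
  have hdφT : dφ T = w T := by rw [hdφdef]; simp only [hx0]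
  have hφcont : Continuous φ := continuous_iff_continuousAt.mpr fun s => (hφd s).continuousAt
  obtain ⟨t1, ht1T, ht1z⟩ := hosc φ dφ (fun s _ => hφd s)
    (fun s _ => by simpa using hdφd s) ⟨T, hTt0, by rw [hφT]; exact one_ne_zero⟩ T
  have ht1gt : T < t1 := by
    rcases eq_or_lt_of_le ht1T with h | h
    · exfalso; rw [← h, hφT] at ht1z; exact one_ne_zero ht1z
    · exact h
  set S : Set ℝ := Icc T t1 ∩ φ ⁻¹' {0} with hSdef
  have hSne : S.Nonempty := ⟨t1, ⟨ht1T, le_rfl⟩, ht1z⟩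
  have hSclosed : IsClosed S := isClosed_Icc.inter (isClosed_singleton.preimage hφcont)
  have hSbdd : BddBelow S := ⟨T, fun s hs => hs.1.1⟩
  set z := sInf S with hzdef
  have hzS : z ∈ S := hSclosed.csInf_mem hSne hSbdd
  have hzz : φ z = 0 := hzS.2
  have hzt1 : z ≤ t1 := hzS.1.2
  have hzT : T < z := by
    rcases eq_or_lt_of_le hzS.1.1 with h | h
    · exfalso; rw [← h, hφT] at hzz; exact one_ne_zero hzz
    · exact h
  have hne0 : ∀ s, s ∈ Ico T z → φ s ≠ 0 := by
    intro s hs h0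
    have : z ≤ s := csInf_le hSbdd ⟨⟨hs.1, le_trans (le_of_lt hs.2) hzt1⟩, h0⟩
    linarith [hs.2]
  have hpos : ∀ s, s ∈ Ico T z → 0 < φ s := by
    intro s hs
    rcases (hne0 s hs).lt_or_gt with h | h
    · exfalso
      have hmem : (0:ℝ) ∈ Ioo (φ s) (φ T) := by rw [hφT]; exact ⟨h, one_pos⟩
      obtain ⟨c, hc, hc0⟩ := intermediate_value_Ioo' hs.1 hφcont.continuousOn hmem
      exact hne0 c ⟨le_of_lt hc.1, lt_trans hc.2 hs.2⟩ hc0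
    · exact h
  set vq : ℝ → ℝ := fun s => dφ s / φ s with hvq
  have hvqd : ∀ s, s ∈ Ico T z → HasDerivAt vq (-(μ s) - (vq s)^2) s := by
    intro s hs
    have h1 := (hdφd s).div (hφd s) (hne0 s hs)
    have e : (-(μ s * φ s) * φ s - dφ s * dφ s) / φ s ^ 2 = -(μ s) - (vq s)^2 := by
      have hnes := hne0 s hs
      simp only [hvq]
      field_simp
    rwa [e] at h1
  have hvqT : vq T = w T := by
    simp only [hvq]
    rw [hφT, hdφT, div_one]
  set g : ℝ → ℝ := fun s => vq s - w s with hgdef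
  have hgT : g T = 0 := by simp only [hgdef]; rw [hvqT, sub_self]
  have hgd : ∀ s, s ∈ Ico T z →
      HasDerivAt g ((-(μ s) - (vq s)^2) - (-(w s)^2 - μ s - ρ s)) s :=
    fun s hs => (hvqd s hs).sub (hwd s hs.1)
  have hvqcont : ∀ s, s ∈ Ico T z → ContinuousAt vq s := by
    intro s hs
    exact ((hdφd s).continuousAt).div ((hφd s).continuousAt) (hne0 s hs)
  have hwcont : ∀ s, T ≤ s → ContinuousAt w s := fun s hs => (hwd s hs).continuousAt
  have hgnonneg : ∀ s, s ∈ Ico T z → 0 ≤ g s := by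
    intro sx hsx
    by_contra hneg
    push_neg at hneg
    have hsubx : Icc T sx ⊆ Ico T z := fun r hr => ⟨hr.1, lt_of_le_of_lt hr.2 hsx.2⟩
    obtain ⟨Mc, hMc⟩ := (isCompact_Icc (a := T) (b := sx)).exists_bound_of_continuousOn
      (f := fun r => vq r + w r)
      (fun r hr => ((hvqcont r (hsubx hr)).add (hwcont r hr.1)).continuousWithinAt)
    have hgcont : ContinuousOn g (Icc T sx) := fun r hr =>
      (((hvqcont r (hsubx hr)).sub (hwcont r hr.1))).continuousWithinAt
    set U : Set ℝ := Icc T sx ∩ g ⁻¹' {0} with hUdef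
    have hUclosed : IsClosed U :=
      hgcont.preimage_isClosed_of_isClosed isClosed_Icc isClosed_singleton
    have hUne : U.Nonempty := ⟨T, ⟨le_rfl, hsx.1⟩, hgT⟩
    have hUbdd : BddAbove U := ⟨sx, fun r hr => hr.1.2⟩
    set u' := sSup U with hu'def
    have hu'U : u' ∈ U := hUclosed.csSup_mem hUne hUbdd
    have hu'0 : g u' = 0 := hu'U.2
    have hu'le : u' ≤ sx := hu'U.1.2
    have hu'T : T ≤ u' := hu'U.1.1
    have hu'lt : u' < sx := by
      rcases eq_or_lt_of_le hu'le with h | h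
      · exfalso; rw [h] at hu'0; linarith
      · exact h
    have hnz : ∀ r, r ∈ Ioc u' sx → g r ≠ 0 := by
      intro r hr h0
      have : r ≤ u' := le_csSup hUbdd ⟨⟨le_trans hu'T (le_of_lt hr.1), hr.2⟩, h0⟩
      linarith [hr.1]
    have hgneglt : ∀ r, r ∈ Ico u' sx → g r ≤ 0 := by
      intro r hr
      rcases eq_or_lt_of_le hr.1 with h | h
      · rw [← h, hu'0]
      · rcases (hnz r ⟨h, le_of_lt hr.2⟩).lt_or_gt with h2 | h2
        · exact le_of_lt h2
        · exfalso
          have hmem2 : (0:ℝ) ∈ Ioo (g sx) (g r) := ⟨hneg, h2⟩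
          obtain ⟨c, hc, hc0⟩ := intermediate_value_Ioo' (le_of_lt hr.2)
            (hgcont.mono (Icc_subset_Icc (le_trans hu'T hr.1) le_rfl)) hmem2
          exact hnz c ⟨lt_trans h hc.1, le_of_lt hc.2⟩ hc0
    have hsubu : Icc u' sx ⊆ Icc T sx := Icc_subset_Icc hu'T le_rfl
    have key := le_gronwallBound_of_liminf_deriv_right_le (f := fun r => -(g r))
      (f' := fun r => -((-(μ r) - (vq r)^2) - (-(w r)^2 - μ r - ρ r)))
      (δ := 0) (K := |Mc|) (ε := 0) (a := u') (b := sx)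
      ((hgcont.mono hsubu).neg)
      (fun r hr rr hrr => by
        have hd := ((hgd r (hsubx (hsubu (Ico_subset_Icc_self hr)))).neg).hasDerivWithinAt
          (s := Ici r)
        exact hd.liminf_right_slope_le hrr)
      (by show -(g u') ≤ (0:ℝ); rw [hu'0, neg_zero])
      (fun r hr => by
        show -((-(μ r) - (vq r)^2) - (-(w r)^2 - μ r - ρ r)) ≤ |Mc| * (-(g r)) + 0
        have hrT : r ∈ Icc T sx := hsubu (Ico_subset_Icc_self hr)
        have h1 : |vq r + w r| ≤ Mc := by
          have := hMc r hrT
          rwa [Real.norm_eq_abs] at this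
        have h2 : g r ≤ 0 := hgneglt r hr
        have h3 : (vq r + w r) * g r ≤ |Mc| * (-(g r)) := by
          have habs : |(vq r + w r) * g r| ≤ |Mc| * (-(g r)) := by
            rw [abs_mul]
            apply mul_le_mul (le_trans h1 (le_abs_self Mc))
              (le_of_eq (abs_of_nonpos h2)) (abs_nonneg _) (abs_nonneg _)
          exact le_trans (le_abs_self _) habs
        have hρr := hρ0 r
        have hfact : (vq r)^2 - (w r)^2 = (vq r + w r) * g r := by
          simp only [hgdef]; ring
        linarith)
    have hfin := key sx ⟨hu'le, le_rfl⟩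
    rw [gronwallBound_ε0, zero_mul] at hfin
    have hfin' : -(g sx) ≤ 0 := hfin
    linarith
  have hvw : ∀ s, s ∈ Ico T z → w s ≤ vq s := by
    intro s hs
    have := hgnonneg s hs
    simp only [hgdef] at this
    linarith
  obtain ⟨Mw, hMw⟩ := (isCompact_Icc (a := T) (b := z)).exists_bound_of_continuousOn
    (f := w) (fun r hr => (hwcont r hr.1).continuousWithinAt)
  have hMw0 : (0:ℝ) ≤ Mw := le_trans (norm_nonneg (w T)) (hMw T ⟨le_rfl, le_of_lt hzT⟩)
  set F : ℝ → ℝ := fun s => Real.log (φ s) + Mw * s with hFdef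
  have hFd : ∀ s, s ∈ Ico T z → HasDerivAt F (vq s + Mw) s := by
    intro s hs
    have h1 := (hφd s).log (hne0 s hs)
    have h2 : HasDerivAt (fun r : ℝ => Mw * r) Mw s := by
      simpa using (hasDerivAt_id s).const_mul Mw
    exact h1.add h2
  have hmono : MonotoneOn F (Ico T z) := by
    apply monotoneOn_of_deriv_nonneg (convex_Ico T z)
    · exact fun s hs => (hFd s hs).continuousAt.continuousWithinAt
    · intro s hs
      rw [interior_Ico] at hs
      exact ((hFd s ⟨le_of_lt hs.1, hs.2⟩).differentiableAt).differentiableWithinAt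
    · intro s hs
      rw [interior_Ico] at hs
      have hs' : s ∈ Ico T z := ⟨le_of_lt hs.1, hs.2⟩
      rw [(hFd s hs').deriv]
      have h1 := hvw s hs'
      have h2 : |w s| ≤ Mw := by
        have := hMw s ⟨hs'.1, le_of_lt hs'.2⟩
        rwa [Real.norm_eq_abs] at this
      have h3 := abs_le.mp h2
      linarith [h3.1]
  have hφlb : ∀ s, s ∈ Ico T z → Real.exp (Mw * T - Mw * z) ≤ φ s := by
    intro s hs
    have h1 : F T ≤ F s := hmono ⟨le_rfl, hzT⟩ hs hs.1
    simp only [hFdef] at h1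
    rw [hφT, Real.log_one] at h1
    have h2 : Mw * T - Mw * s ≤ Real.log (φ s) := by linarith
    calc Real.exp (Mw * T - Mw * z) ≤ Real.exp (Mw * T - Mw * s) := by
          apply Real.exp_le_exp.mpr
          have := hs.2
          nlinarith
    _ ≤ Real.exp (Real.log (φ s)) := Real.exp_le_exp.mpr h2
    _ = φ s := Real.exp_log (hpos s hs)
  have htend : Filter.Tendsto φ (𝓝[<] z) (𝓝 (φ z)) :=
    (hφcont.continuousAt).continuousWithinAt
  have hev : ∀ᶠ s in 𝓝[<] z, Real.exp (Mw * T - Mw * z) ≤ φ s := by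
    apply Filter.eventually_of_mem
      (mem_nhdsWithin.mpr ⟨Ioi T, isOpen_Ioi, hzT, fun r hr => hr⟩)
    rintro s ⟨hs1, hs2⟩
    exact hφlb s ⟨le_of_lt hs1, hs2⟩
  have hfinal := ge_of_tendsto htend hev
  rw [hzz] at hfinal
  linarith [Real.exp_pos (Mw * T - Mw * z)]
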